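/- arXiv:2304.05398 — 2 statements merged into one kernel-verified Lean document; each statement's English description precedes it below -/
import Mathlib

section
/- Let ν = N(m_ν, Σ_ν), μ_0 = N(m_0, Σ_0), μ_1 = N(m_1, Σ_1) be Gaussian measures on ℝ^d with positive definite covariances, and let T_0 (resp. T_1) be the 2-Wasserstein optimal transport map from ν to μ_0 (resp. from ν to μ_1). Then H(μ_0) + ∫⟨−Σ_0^{-1}(T_0(x) − m_0), T_1(x) − T_0(x)⟩ dν(x) ≤ H(μ_1). (The integrand pairs the Bures–Wasserstein gradient of the entropy at μ_0, namely x ↦ −Σ_0^{-1}(x − m_0), composed with T_0, against T_1 − T_0.) -/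
open MeasureTheory Matrix Real Filter
open scoped RealInnerProductSpace ENNReal NNReal

noncomputable section

abbrev E (d : ℕ) := EuclideanSpace ℝ (Fin d)
abbrev Mat (d : ℕ) := Matrix (Fin d) (Fin d) ℝ

variable {d : ℕ}

/-- Principal positive semidefinite square root of a matrix (junk value `0` if the
matrix is not positive semidefinite). -/
def msqrt (A : Mat d) : Mat d := by
  classical exact if h : A.PosSemidef then
    (h.1.eigenvectorUnitary : Mat d) * diagonal ((↑) ∘ (√·) ∘ h.1.eigenvalues) *
      (star h.1.eigenvectorUnitary : Mat d) else 0

/-- Loewner order `A ⪯ B`, i.e. `B - A` is positive semidefinite. -/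
def Loewner (A B : Mat d) : Prop := (B - A).PosSemidef

/-- The `ℓ² → ℓ²` operator norm of a matrix. -/
def opNorm (A : Mat d) : ℝ := ‖Matrix.toEuclideanCLM (𝕜 := ℝ) A‖

/-- Largest eigenvalue of a (Hermitian) matrix; junk value `0` otherwise. -/
def lamMax (A : Mat d) : ℝ := by
  classical exact if h : A.IsHermitian then ⨆ i, h.eigenvalues i else 0

/-- Density of the Gaussian `N(m, S)` with respect to Lebesgue measure. -/
def gaussPdf (m : E d) (S : Mat d) (x : E d) : ℝ :=
  (Real.sqrt ((2 * Real.pi) ^ d * S.det))⁻¹ *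
    Real.exp (-(1 / 2 : ℝ) * ⟪x - m, (S⁻¹).toEuclideanLin (x - m)⟫)

/-- The Gaussian measure `N(m, S)` on `ℝ^d`. -/
def gaussian (m : E d) (S : Mat d) : Measure (E d) :=
  (volume : Measure (E d)).withDensity fun x => ENNReal.ofReal (gaussPdf m S x)

/-- Hessian matrix of `V : ℝ^d → ℝ` at `x`. -/
def hess (V : E d → ℝ) (x : E d) : Mat d := fun i j =>
  fderiv ℝ (fun y => fderiv ℝ V y (EuclideanSpace.single j 1)) x (EuclideanSpace.single i 1)

/-- `∫ ∇V dN(m,S)`. -/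
def meanGrad (V : E d → ℝ) (m : E d) (S : Mat d) : E d :=
  ∫ x, gradient V x ∂ gaussian m S

/-- `∫ ∇²V dN(m,S)`. -/
def meanHess (V : E d → ℝ) (m : E d) (S : Mat d) : Mat d := fun i j =>
  ∫ x, hess V x i j ∂ gaussian m S

/-- Negative entropy `H(N(m,S)) = ∫ log(N(m,S)) dN(m,S) = -(1/2) log((2πe)^d det S)`. -/
def negEnt (S : Mat d) : ℝ := -(1 / 2 : ℝ) * Real.log ((2 * Real.pi * Real.exp 1) ^ d * S.det)

/-- Squared `2`-Wasserstein distance between the Gaussians `N(m₀,S₀)` and `N(m₁,S₁)`. -/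
def W2sq (m0 m1 : E d) (S0 S1 : Mat d) : ℝ :=
  ‖m0 - m1‖ ^ 2 + (S0 + S1 - (2 : ℝ) • msqrt (msqrt S0 * S1 * msqrt S0)).trace

/-- The objective `F(N(m,S)) = ∫ V dN(m,S) + H(N(m,S))`. -/
def Fobj (V : E d → ℝ) (m : E d) (S : Mat d) : ℝ :=
  (∫ x, V x ∂ gaussian m S) + negEnt S

/-- Optimal transport map from `N(m₀,S₀)` to `N(m₁,S₁)`. -/
def otMap (m0 m1 : E d) (S0 S1 : Mat d) (x : E d) : E d :=
  m1 + ((msqrt S0)⁻¹ * msqrt (msqrt S0 * S1 * msqrt S0) * (msqrt S0)⁻¹).toEuclideanLin (x - m0)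

/-- One step of FB–GVI on the (mean, covariance) pair. -/
def fbStep (V : E d → ℝ) (η : ℝ) (p : E d × Mat d) : E d × Mat d :=
  let Sh := (1 - η • meanHess V p.1 p.2) * p.2 * (1 - η • meanHess V p.1 p.2)
  (p.1 - η • meanGrad V p.1 p.2,
    (1 / 2 : ℝ) • (Sh + (2 * η) • (1 : Mat d) + msqrt (Sh * (Sh + (4 * η) • 1))))

/-- The FB–GVI iterates. -/
def fbgvi (V : E d → ℝ) (η : ℝ) (p0 : E d × Mat d) : ℕ → E d × Mat d
  | 0 => p0
  | k + 1 => fbStep V η (fbgvi V η p0 k)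

/-- One step of Stochastic FB–GVI with sample `x`. -/
def sfbStep (V : E d → ℝ) (η : ℝ) (p : E d × Mat d) (x : E d) : E d × Mat d :=
  let Sh := (1 - η • hess V x) * p.2 * (1 - η • hess V x)
  (p.1 - η • gradient V x,
    (1 / 2 : ℝ) • (Sh + (2 * η) • (1 : Mat d) + msqrt (Sh * (Sh + (4 * η) • 1))))

/-- The Stochastic FB–GVI iterates driven by the samples `X`. -/
def sfbgvi {Ω : Type*} (V : E d → ℝ) (η : ℝ) (p0 : E d × Mat d) (X : ℕ → Ω → E d) :
    ℕ → Ω → E d × Mat d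
  | 0 => fun _ => p0
  | k + 1 => fun ω => sfbStep V η (sfbgvi V η p0 X k ω) (X k ω)

/-- The σ-algebra generated by `X 0, …, X (k-1)`. -/
def natFilt {Ω : Type*} [MeasurableSpace Ω] (X : ℕ → Ω → E d) (k : ℕ) : MeasurableSpace Ω :=
  ⨆ i ∈ Finset.range k, MeasurableSpace.comap (X i) inferInstance



section AuxAll
variable {d : ℕ}

section MatrixAux
variable {A : Mat d}

lemma msqrt_of (h : A.PosSemidef) : msqrt A =
    (h.1.eigenvectorUnitary : Mat d) * diagonal ((↑) ∘ (√·) ∘ h.1.eigenvalues) *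
      (star h.1.eigenvectorUnitary : Mat d) := by
  unfold msqrt; rw [dif_pos h]

lemma msqrt_posSemidef (h : A.PosSemidef) : (msqrt A).PosSemidef := by
  rw [msqrt_of h]
  exact (Unitary.isUnit_coe).posSemidef_star_right_conjugate_iff.mpr
    (posSemidef_diagonal_iff.mpr fun i => by simp [Real.sqrt_nonneg])

lemma msqrt_mul_self (h : A.PosSemidef) : msqrt A * msqrt A = A := by
  rw [msqrt_of h]
  have hU : (star h.1.eigenvectorUnitary : Mat d) * (h.1.eigenvectorUnitary : Mat d) = 1 :=
    Unitary.coe_star_mul_self _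
  rw [show (h.1.eigenvectorUnitary : Mat d) * diagonal ((↑) ∘ (√·) ∘ h.1.eigenvalues) *
      (star h.1.eigenvectorUnitary : Mat d) * ((h.1.eigenvectorUnitary : Mat d) *
        diagonal ((↑) ∘ (√·) ∘ h.1.eigenvalues) * (star h.1.eigenvectorUnitary : Mat d))
      = (h.1.eigenvectorUnitary : Mat d) * diagonal ((↑) ∘ (√·) ∘ h.1.eigenvalues) *
      ((star h.1.eigenvectorUnitary : Mat d) * (h.1.eigenvectorUnitary : Mat d)) *
        diagonal ((↑) ∘ (√·) ∘ h.1.eigenvalues) * (star h.1.eigenvectorUnitary : Mat d) by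
      simp only [Matrix.mul_assoc], hU, Matrix.mul_one,
      Matrix.mul_assoc (h.1.eigenvectorUnitary : Mat d), diagonal_mul_diagonal]
  conv_rhs => rw [h.1.spectral_theorem, Unitary.conjStarAlgAut_apply]
  congr 3
  funext i
  simp [Real.mul_self_sqrt (h.eigenvalues_nonneg i)]

lemma posDef_of_posSemidef_det_ne_zero (h : A.PosSemidef) (hd : A.det ≠ 0) :
    A.PosDef := by
  exact h.posDef_iff_det_ne_zero.mpr hd
  /-refine ⟨h.1, fun x hx => ?_⟩
  rcases (h.2 x).lt_or_eq with hlt | heq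
  · exact hlt
  · exfalso
    have h0 : A *ᵥ x = 0 := (h.dotProduct_mulVec_zero_iff x).mp heq.symm
    have hinj : Function.Injective (A.mulVec) :=
      Matrix.mulVec_injective_iff_isUnit.mpr ((Matrix.isUnit_iff_isUnit_det _).mpr hd.isUnit)
    exact hx (hinj (by simpa using h0))-/

lemma msqrt_det_sq (h : A.PosSemidef) : (msqrt A).det * (msqrt A).det = A.det := by
  rw [← Matrix.det_mul, msqrt_mul_self h]

lemma msqrt_posDef (h : A.PosDef) : (msqrt A).PosDef := by
  refine posDef_of_posSemidef_det_ne_zero (msqrt_posSemidef h.posSemidef) (fun h0 => ?_)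
  have := msqrt_det_sq h.posSemidef
  rw [h0, mul_zero] at this
  exact h.det_pos.ne' this.symm

lemma msqrt_transpose (h : A.PosSemidef) : (msqrt A)ᵀ = msqrt A := by
  have := (msqrt_posSemidef h).1
  rwa [Matrix.IsHermitian, Matrix.conjTranspose_eq_transpose_of_trivial] at this

lemma msqrt_det_eq_sqrt (h : A.PosDef) : (msqrt A).det = Real.sqrt A.det := by
  rw [← msqrt_det_sq h.posSemidef, Real.sqrt_mul_self (msqrt_posDef h).det_pos.le]

lemma trace_eq_sum_eigenvalues (hA : A.IsHermitian) :
    A.trace = ∑ i, hA.eigenvalues i := by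
  conv_lhs => rw [hA.spectral_theorem]
  rw [Unitary.conjStarAlgAut_apply, Matrix.trace_mul_cycle]
  rw [Unitary.coe_star_mul_self, Matrix.one_mul]
  simp [Matrix.trace_diagonal]

lemma log_det_le_trace_sub {M : Mat d} (hM : M.PosDef) :
    Real.log M.det ≤ M.trace - d := by
  have he := hM.isHermitian
  have hdet : M.det = ∏ i, he.eigenvalues i := by simpa using he.det_eq_prod_eigenvalues
  rw [hdet, Real.log_prod (fun i _ => (hM.eigenvalues_pos i).ne'),
    trace_eq_sum_eigenvalues he]
  have hd : (d : ℝ) = ∑ _i : Fin d, (1 : ℝ) := by simp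
  rw [hd, ← Finset.sum_sub_distrib]
  exact Finset.sum_le_sum fun i _ => Real.log_le_sub_one_of_pos (hM.eigenvalues_pos i)

end MatrixAux

-- transfer lemmas
lemma euclidean_integral_eq (F : E d → ℝ) :
    ∫ u : E d, F u = ∫ v : Fin d → ℝ, F ((MeasurableEquiv.toLp 2 (Fin d → ℝ)) v) := by
  have h := (EuclideanSpace.volume_preserving_symm_measurableEquiv_toLp (Fin d)).symm
  rw [← h.integral_comp (MeasurableEquiv.measurableEmbedding _)]
  rfl

lemma euclidean_symm_apply (v : Fin d → ℝ) (i : Fin d) :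
    ((MeasurableEquiv.toLp 2 (Fin d → ℝ)) v : E d) i = v i := rfl

lemma euclidean_norm_sq (u : E d) : ‖u‖ ^ 2 = ∑ k, u k ^ 2 := by
  rw [EuclideanSpace.norm_eq, Real.sq_sqrt]
  · simp [sq_abs]
  · positivity

lemma wgt_eq_prod (u : E d) :
    Real.exp (-(1/2 : ℝ) * ‖u‖ ^ 2) = ∏ k, Real.exp (-(1/2 : ℝ) * u k ^ 2) := by
  rw [euclidean_norm_sq, ← Real.exp_sum]
  congr 1
  rw [Finset.mul_sum]

lemma euclidean_integral_prod (φ : Fin d → ℝ → ℝ) :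
    ∫ u : E d, ∏ k, φ k (u k) = ∏ k, ∫ t : ℝ, φ k t := by
  rw [euclidean_integral_eq]
  simp only [euclidean_symm_apply]
  exact MeasureTheory.integral_fintype_prod_eq_prod (ι := Fin d) φ

lemma euclidean_integrable_prod (φ : Fin d → ℝ → ℝ) (h : ∀ k, Integrable (φ k)) :
    Integrable (fun u : E d => ∏ k, φ k (u k)) := by
  have hPi : Integrable (fun v : Fin d → ℝ => ∏ k, φ k (v k)) := Integrable.fintype_prod h
  have hmp := EuclideanSpace.volume_preserving_symm_measurableEquiv_toLp (Fin d)
  rw [← hmp.map_eq] at hPi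
  have h2 := (MeasurableEquiv.measurableEmbedding
    (MeasurableEquiv.toLp 2 (Fin d → ℝ)).symm).integrable_map_iff.mp hPi
  exact h2


lemma integrable_gauss1 : Integrable (fun x : ℝ => Real.exp (-(1/2 : ℝ) * x ^ 2)) := by
  simpa using integrable_exp_neg_mul_sq (by norm_num : (0:ℝ) < 1/2)

lemma integrable_mul_gauss1 : Integrable (fun x : ℝ => x * Real.exp (-(1/2 : ℝ) * x ^ 2)) := by
  simpa using integrable_mul_exp_neg_mul_sq (by norm_num : (0:ℝ) < 1/2)

lemma integrable_sq_mul_gauss1 :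
    Integrable (fun x : ℝ => x ^ 2 * Real.exp (-(1/2 : ℝ) * x ^ 2)) := by
  have h := integrable_rpow_mul_exp_neg_mul_sq (by norm_num : (0:ℝ) < 1/2)
    (by norm_num : (-1:ℝ) < 2)
  have : ∀ x : ℝ, x ^ (2:ℝ) * Real.exp (-(1/2 : ℝ) * x ^ 2)
      = x ^ 2 * Real.exp (-(1/2 : ℝ) * x ^ 2) := fun x => by
    rw [← Real.rpow_natCast x 2]; norm_num
  simpa [this] using h

lemma integral_gauss1 : ∫ x : ℝ, Real.exp (-(1/2 : ℝ) * x ^ 2) = Real.sqrt (2 * π) := by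
  have := integral_gaussian (1/2 : ℝ)
  simpa [div_div_eq_mul_div, one_div, mul_comm] using this

lemma integral_mul_gauss1 : ∫ x : ℝ, x * Real.exp (-(1/2 : ℝ) * x ^ 2) = 0 := by
  have h := MeasureTheory.integral_neg_eq_self
    (fun x : ℝ => x * Real.exp (-(1/2 : ℝ) * x ^ 2)) (volume : Measure ℝ)
  have h2 : ∫ x : ℝ, -x * Real.exp (-(1/2 : ℝ) * (-x) ^ 2)
      = ∫ x : ℝ, x * Real.exp (-(1/2 : ℝ) * x ^ 2) := h
  simp only [neg_sq, neg_mul] at h2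
  rw [integral_neg] at h2
  have h3 : ∀ x : ℝ, x * Real.exp (-(1/2 : ℝ) * x ^ 2) = x * Real.exp (-(1/2 * x ^ 2) : ℝ) := by
    intro x; ring_nf
  simp only [h3]
  linarith

lemma integral_sq_mul_gauss1 :
    ∫ x : ℝ, x ^ 2 * Real.exp (-(1/2 : ℝ) * x ^ 2) = Real.sqrt (2 * π) := by
  have habs2 : ∫ x : ℝ, x ^ 2 * Real.exp (-(1/2 : ℝ) * x ^ 2)
      = 2 * ∫ x in Set.Ioi (0:ℝ), x ^ 2 * Real.exp (-(1/2 : ℝ) * x ^ 2) := by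
    rw [← integral_comp_abs (f := fun x : ℝ => x ^ 2 * Real.exp (-(1/2 : ℝ) * x ^ 2))]
    simp [sq_abs]
  have habs0 : ∫ x : ℝ, Real.exp (-(1/2 : ℝ) * x ^ 2)
      = 2 * ∫ x in Set.Ioi (0:ℝ), Real.exp (-(1/2 : ℝ) * x ^ 2) := by
    rw [← integral_comp_abs (f := fun x : ℝ => Real.exp (-(1/2 : ℝ) * x ^ 2))]
    simp [sq_abs]
  -- integration by parts on Ioi 0
  set g : ℝ → ℝ := fun x => -x * Real.exp (-(1/2 : ℝ) * x ^ 2) with hg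
  have hderiv : ∀ x ∈ Set.Ioi (0:ℝ), HasDerivAt g
      (x ^ 2 * Real.exp (-(1/2 : ℝ) * x ^ 2) - Real.exp (-(1/2 : ℝ) * x ^ 2)) x := by
    intro x _
    have h1 : HasDerivAt (fun x : ℝ => -(1/2 : ℝ) * x ^ 2) (-(1/2 : ℝ) * (2 * x)) x := by
      simpa using ((hasDerivAt_pow 2 x).const_mul (-(1/2 : ℝ)))
    have h2 : HasDerivAt (fun x : ℝ => Real.exp (-(1/2 : ℝ) * x ^ 2))
        (Real.exp (-(1/2 : ℝ) * x ^ 2) * (-(1/2 : ℝ) * (2 * x))) x := h1.exp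
    have h3 : HasDerivAt (fun y : ℝ => -y * Real.exp (-(1/2 : ℝ) * y ^ 2)) _ x :=
      (hasDerivAt_neg x).mul h2
    convert h3 using 1
    ring
  have hint : IntegrableOn (fun x : ℝ =>
      x ^ 2 * Real.exp (-(1/2 : ℝ) * x ^ 2) - Real.exp (-(1/2 : ℝ) * x ^ 2)) (Set.Ioi 0) :=
    (integrable_sq_mul_gauss1.sub integrable_gauss1).integrableOn
  have htend : Filter.Tendsto g Filter.atTop (nhds 0) := by
    have ho := rpow_mul_exp_neg_mul_sq_isLittleO_exp_neg (by norm_num : (0:ℝ) < 1/2) 1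
    have ht : Filter.Tendsto (fun x : ℝ => Real.exp (-(1/2 : ℝ) * x)) Filter.atTop (nhds 0) := by
      have : Filter.Tendsto (fun x : ℝ => -(1/2 : ℝ) * x) Filter.atTop Filter.atBot :=
        (tendsto_const_nhds.neg_mul_atTop (by norm_num) Filter.tendsto_id)
      exact Real.tendsto_exp_atBot.comp this
    have h0 : Filter.Tendsto (fun x : ℝ => x ^ (1:ℝ) * Real.exp (-(1/2 : ℝ) * x ^ 2))
        Filter.atTop (nhds 0) := ho.trans_tendsto ht
    have heq : (fun x : ℝ => x ^ (1:ℝ) * Real.exp (-(1/2 : ℝ) * x ^ 2)) =ᶠ[Filter.atTop]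
        fun x => x * Real.exp (-(1/2 : ℝ) * x ^ 2) := by
      filter_upwards [Filter.eventually_ge_atTop (0:ℝ)] with x hx
      rw [Real.rpow_one]
    have := (Filter.Tendsto.congr' heq h0).neg
    simpa [hg, neg_mul] using this
  have hcont : ContinuousWithinAt g (Set.Ici 0) 0 := by
    apply Continuous.continuousWithinAt
    continuity
  have hparts := MeasureTheory.integral_Ioi_of_hasDerivAt_of_tendsto hcont hderiv hint htend
  have hg0 : g 0 = 0 := by simp [hg]
  rw [hg0, sub_zero] at hparts
  rw [integral_sub (integrable_sq_mul_gauss1.integrableOn) (integrable_gauss1.integrableOn)]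
    at hparts
  have : ∫ x in Set.Ioi (0:ℝ), x ^ 2 * Real.exp (-(1/2 : ℝ) * x ^ 2)
      = ∫ x in Set.Ioi (0:ℝ), Real.exp (-(1/2 : ℝ) * x ^ 2) := by linarith
  rw [habs2, this, ← habs0, integral_gauss1]


def psi (i j : Fin d) (k : Fin d) (t : ℝ) : ℝ :=
  (if k = i then t else 1) * (if k = j then t else 1) * Real.exp (-(1/2 : ℝ) * t ^ 2)

lemma psi_prod (i j : Fin d) (u : E d) :
    ∏ k, psi i j k (u k) = u i * u j * Real.exp (-(1/2 : ℝ) * ‖u‖ ^ 2) := by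
  rw [wgt_eq_prod]
  unfold psi
  rw [Finset.prod_mul_distrib, Finset.prod_mul_distrib]
  congr 1
  congr 1
  · simp
  · simp

lemma psi_integrable (i j k : Fin d) : Integrable (psi i j k) := by
  unfold psi
  by_cases hki : k = i <;> by_cases hkj : k = j
  · simp only [if_pos hki, if_pos hkj, ← pow_two]
    exact integrable_sq_mul_gauss1
  · simp only [if_pos hki, if_neg hkj, mul_one]
    exact integrable_mul_gauss1
  · simp only [if_neg hki, if_pos hkj, one_mul]
    exact integrable_mul_gauss1
  · simp only [if_neg hki, if_neg hkj, mul_one, one_mul]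
    exact integrable_gauss1

lemma integrable_coord_mul (i j : Fin d) :
    Integrable (fun u : E d => u i * u j * Real.exp (-(1/2 : ℝ) * ‖u‖ ^ 2)) := by
  have := euclidean_integrable_prod (psi i j) (psi_integrable i j)
  simpa only [psi_prod] using this

lemma integral_coord_mul (i j : Fin d) :
    ∫ u : E d, u i * u j * Real.exp (-(1/2 : ℝ) * ‖u‖ ^ 2)
      = if i = j then Real.sqrt (2 * π) ^ d else 0 := by
  have h := euclidean_integral_prod (psi i j)
  simp only [psi_prod] at h
  rw [h]
  rcases eq_or_ne i j with rfl | hij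
  · rw [if_pos rfl]
    have : ∀ k : Fin d, ∫ t : ℝ, psi i i k t = Real.sqrt (2 * π) := by
      intro k
      unfold psi
      by_cases hki : k = i
      · simp only [if_pos hki, ← pow_two]
        exact integral_sq_mul_gauss1
      · simp only [if_neg hki, mul_one, one_mul]
        exact integral_gauss1
    simp [this]
  · rw [if_neg hij]
    apply Finset.prod_eq_zero (Finset.mem_univ i)
    unfold psi
    simp only [if_pos rfl, if_neg hij, mul_one]
    exact integral_mul_gauss1

def psil (i : Fin d) (k : Fin d) (t : ℝ) : ℝ :=
  (if k = i then t else 1) * Real.exp (-(1/2 : ℝ) * t ^ 2)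

lemma psil_prod (i : Fin d) (u : E d) :
    ∏ k, psil i k (u k) = u i * Real.exp (-(1/2 : ℝ) * ‖u‖ ^ 2) := by
  rw [wgt_eq_prod]
  unfold psil
  rw [Finset.prod_mul_distrib]
  congr 1
  simp

lemma psil_integrable (i k : Fin d) : Integrable (psil i k) := by
  unfold psil
  by_cases hki : k = i
  · simp only [if_pos hki]
    exact integrable_mul_gauss1
  · simp only [if_neg hki, one_mul]
    exact integrable_gauss1

lemma integrable_coord (i : Fin d) :
    Integrable (fun u : E d => u i * Real.exp (-(1/2 : ℝ) * ‖u‖ ^ 2)) := by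
  have := euclidean_integrable_prod (psil i) (psil_integrable i)
  simpa only [psil_prod] using this

lemma integral_coord (i : Fin d) :
    ∫ u : E d, u i * Real.exp (-(1/2 : ℝ) * ‖u‖ ^ 2) = 0 := by
  have h := euclidean_integral_prod (psil i)
  simp only [psil_prod] at h
  rw [h]
  apply Finset.prod_eq_zero (Finset.mem_univ i)
  unfold psil
  simp only [if_pos rfl]
  exact integral_mul_gauss1

lemma integrable_wgt :
    Integrable (fun u : E d => Real.exp (-(1/2 : ℝ) * ‖u‖ ^ 2)) := by
  have := euclidean_integrable_prod (fun _ : Fin d => fun t : ℝ => Real.exp (-(1/2 : ℝ) * t ^ 2))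
    (fun _ => integrable_gauss1)
  simpa only [← wgt_eq_prod] using this

lemma integral_wgt :
    ∫ u : E d, Real.exp (-(1/2 : ℝ) * ‖u‖ ^ 2) = Real.sqrt (2 * π) ^ d := by
  have h := euclidean_integral_prod (fun _ : Fin d => fun t => Real.exp (-(1/2 : ℝ) * t ^ 2))
  simp only [← wgt_eq_prod] at h
  rw [h, integral_gauss1]
  simp

-- toEuclideanLin helpers
lemma toEuclideanLin_coord (M : Mat d) (x : E d) (i : Fin d) :
    (M.toEuclideanLin x) i = ∑ j, M i j * x j := rfl

lemma toEuclideanLin_mul_apply (M N : Mat d) (x : E d) :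
    (M * N).toEuclideanLin x = M.toEuclideanLin (N.toEuclideanLin x) := by
  simp [Matrix.toEuclideanLin_apply, Matrix.mulVec_mulVec]

lemma toEuclideanLin_one_apply (x : E d) : (1 : Mat d).toEuclideanLin x = x := by
  simp [Matrix.toEuclideanLin_apply]

lemma inner_toEuclideanLin_left (M : Mat d) (x y : E d) :
    ⟪M.toEuclideanLin x, y⟫ = ⟪x, Mᵀ.toEuclideanLin y⟫ := by
  simp only [PiLp.inner_apply, RCLike.inner_apply, starRingEnd_apply, star_trivial,
    toEuclideanLin_coord, Matrix.transpose_apply, Finset.sum_mul, Finset.mul_sum]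
  rw [Finset.sum_comm]
  exact Finset.sum_congr rfl fun i _ => Finset.sum_congr rfl fun j _ => by ring

lemma inner_expand (C D : Mat d) (c : E d) (u : E d) :
    ⟪C.toEuclideanLin u, c + D.toEuclideanLin u⟫
      = (∑ k, (∑ i, C i k * c i) * u k)
        + ∑ k, ∑ l, (Cᵀ * D) k l * (u k * u l) := by
  rw [inner_add_right]
  congr 1
  · simp only [PiLp.inner_apply, RCLike.inner_apply, starRingEnd_apply, star_trivial,
      toEuclideanLin_coord, Finset.sum_mul]
    rw [Finset.sum_comm]
    exact Finset.sum_congr rfl fun k _ => by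
      rw [Finset.mul_sum]; exact Finset.sum_congr rfl fun i _ => by ring
  · have h := inner_toEuclideanLin_left C u (D.toEuclideanLin u)
    rw [h, ← toEuclideanLin_mul_apply]
    simp only [PiLp.inner_apply, RCLike.inner_apply, starRingEnd_apply, star_trivial,
      toEuclideanLin_coord, Finset.mul_sum]
    exact Finset.sum_congr rfl fun k _ => by
      rw [Finset.sum_mul]; exact Finset.sum_congr rfl fun l _ => by ring

lemma std_integral (a : Fin d → ℝ) (M : Mat d) :
    ∫ u : E d, ((∑ k, a k * u k) + ∑ k, ∑ l, M k l * (u k * u l))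
        * Real.exp (-(1/2 : ℝ) * ‖u‖ ^ 2)
      = M.trace * Real.sqrt (2 * π) ^ d := by
  have hpt : ∀ u : E d,
      ((∑ k, a k * u k) + ∑ k, ∑ l, M k l * (u k * u l)) * Real.exp (-(1/2 : ℝ) * ‖u‖ ^ 2)
        = (∑ k, a k * (u k * Real.exp (-(1/2 : ℝ) * ‖u‖ ^ 2)))
          + ∑ k, ∑ l, M k l * (u k * u l * Real.exp (-(1/2 : ℝ) * ‖u‖ ^ 2)) := by
    intro u
    rw [add_mul, Finset.sum_mul, Finset.sum_mul]
    congr 1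
    · exact Finset.sum_congr rfl fun k _ => by ring
    · refine Finset.sum_congr rfl fun k _ => ?_
      rw [Finset.sum_mul]
      exact Finset.sum_congr rfl fun l _ => by ring
  simp only [hpt]
  have h1 : Integrable (fun u : E d =>
      ∑ k, a k * (u k * Real.exp (-(1/2 : ℝ) * ‖u‖ ^ 2))) :=
    integrable_finset_sum _ fun k _ => (integrable_coord k).const_mul (a k)
  have h2 : Integrable (fun u : E d =>
      ∑ k, ∑ l, M k l * (u k * u l * Real.exp (-(1/2 : ℝ) * ‖u‖ ^ 2))) :=
    integrable_finset_sum _ fun k _ =>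
      integrable_finset_sum _ fun l _ => (integrable_coord_mul k l).const_mul (M k l)
  rw [integral_add h1 h2]
  have e1 : ∫ u : E d, ∑ k, a k * (u k * Real.exp (-(1/2 : ℝ) * ‖u‖ ^ 2)) = 0 := by
    rw [integral_finset_sum _ fun k _ => (integrable_coord k).const_mul (a k)]
    have : ∀ k : Fin d, ∫ u : E d, a k * (u k * Real.exp (-(1/2 : ℝ) * ‖u‖ ^ 2)) = 0 := by
      intro k
      rw [integral_const_mul, integral_coord, mul_zero]
    simp only [this, Finset.sum_const_zero]
  have e2 : ∫ u : E d, ∑ k, ∑ l, M k l * (u k * u l * Real.exp (-(1/2 : ℝ) * ‖u‖ ^ 2))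
      = M.trace * Real.sqrt (2 * π) ^ d := by
    rw [integral_finset_sum _ fun k _ =>
      integrable_finset_sum _ fun l _ => (integrable_coord_mul k l).const_mul (M k l)]
    have : ∀ k : Fin d, ∫ u : E d, ∑ l, M k l * (u k * u l * Real.exp (-(1/2 : ℝ) * ‖u‖ ^ 2))
        = M k k * Real.sqrt (2 * π) ^ d := by
      intro k
      rw [integral_finset_sum _ fun l _ => (integrable_coord_mul k l).const_mul (M k l)]
      have : ∀ l : Fin d, ∫ u : E d, M k l * (u k * u l * Real.exp (-(1/2 : ℝ) * ‖u‖ ^ 2))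
          = M k l * (if k = l then Real.sqrt (2 * π) ^ d else 0) := by
        intro l
        rw [integral_const_mul, integral_coord_mul]
      simp only [this, mul_ite, mul_zero]
      simp [Finset.sum_ite_eq]
    simp only [this]
    rw [← Finset.sum_mul]
    rfl
  rw [e1, e2, zero_add]

lemma real_sqrt_pow {x : ℝ} (hx : 0 ≤ x) (n : ℕ) : Real.sqrt (x ^ n) = Real.sqrt x ^ n := by
  have h : Real.sqrt x ^ n * Real.sqrt x ^ n = x ^ n := by
    rw [← mul_pow, Real.mul_self_sqrt hx]
  rw [← h, Real.sqrt_mul_self (pow_nonneg (Real.sqrt_nonneg x) n)]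

lemma gaussPdf_nonneg (m : E d) (S : Mat d) (x : E d) : 0 ≤ gaussPdf m S x := by
  unfold gaussPdf; positivity

lemma gaussPdf_continuous (m : E d) (S : Mat d) : Continuous (gaussPdf m S) := by
  unfold gaussPdf
  apply Continuous.mul continuous_const
  apply Real.continuous_exp.comp
  apply Continuous.mul continuous_const
  exact Continuous.inner (continuous_id.sub continuous_const)
    ((LinearMap.continuous_of_finiteDimensional ((S⁻¹).toEuclideanLin)).comp
      (continuous_id.sub continuous_const))

lemma integral_gaussian_density (m : E d) (S : Mat d) (f : E d → ℝ) :
    ∫ x, f x ∂ gaussian m S = ∫ x, gaussPdf m S x * f x := by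
  have hmeas : Measurable (fun x : E d => (gaussPdf m S x).toNNReal) :=
    (gaussPdf_continuous m S).measurable.real_toNNReal
  have : gaussian m S
      = (volume : Measure (E d)).withDensity
          (fun x => ((fun y : E d => (gaussPdf m S y).toNNReal) x : ℝ≥0∞)) := rfl
  rw [this, integral_withDensity_eq_integral_smul hmeas f]
  congr 1
  funext x
  rw [NNReal.smul_def, Real.coe_toNNReal _ (gaussPdf_nonneg m S x), smul_eq_mul]

lemma integral_gaussian_change (m : E d) {S : Mat d} (hS : S.PosDef) (f : E d → ℝ)
    (hf : Continuous f) :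
    ∫ x, f x ∂ gaussian m S
      = (Real.sqrt (2 * π) ^ d)⁻¹ *
        ∫ u : E d, f (m + (msqrt S).toEuclideanLin u) * Real.exp (-(1/2 : ℝ) * ‖u‖ ^ 2) := by
  set B := msqrt S with hBdef
  have hBpd : B.PosDef := msqrt_posDef hS
  have hBB : B * B = S := msqrt_mul_self hS.posSemidef
  have hBdet : (0 : ℝ) < B.det := hBpd.det_pos
  have hSdet : (0 : ℝ) < S.det := hS.det_pos
  have hBu : IsUnit B.det := hBdet.ne'.isUnit
  -- the linear map
  have hLcont : Continuous (Matrix.toEuclideanLin B) :=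
    LinearMap.continuous_of_finiteDimensional _
  have hdetL : LinearMap.det (Matrix.toEuclideanLin B : E d →ₗ[ℝ] E d) = B.det := by
    rw [Matrix.toEuclideanLin_eq_toLin, LinearMap.det_toLin]
  have hlin : Measure.map (Matrix.toEuclideanLin B) (volume : Measure (E d))
      = ENNReal.ofReal |(B.det)⁻¹| • volume := by
    have := MeasureTheory.Measure.map_linearMap_addHaar_eq_smul_addHaar
      (μ := (volume : Measure (E d))) (f := (Matrix.toEuclideanLin B : E d →ₗ[ℝ] E d))
      (by rw [hdetL]; exact hBdet.ne')
    rw [hdetL] at this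
    exact this
  set T : E d → E d := fun u => m + (Matrix.toEuclideanLin B) u with hTdef
  have hTcont : Continuous T := continuous_const.add hLcont
  have hmap : Measure.map T (volume : Measure (E d)) = ENNReal.ofReal |(B.det)⁻¹| • volume := by
    have hcomp : T = (fun x : E d => m + x) ∘ (Matrix.toEuclideanLin B) := rfl
    rw [hcomp, ← Measure.map_map (measurable_const_add m) hLcont.measurable, hlin,
      Measure.map_smul]
    congr 1
    exact (measurePreserving_add_left (volume : Measure (E d)) m).map_eq
  have hTu : ∀ u : E d, T u = m + (Matrix.toEuclideanLin B) u := fun _ => rfl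
  have hgcont : Continuous (fun x : E d => gaussPdf m S x * f x) :=
    (gaussPdf_continuous m S).mul hf
  have hint : ∫ u : E d, gaussPdf m S (T u) * f (T u)
      = |(B.det)⁻¹| * ∫ x, gaussPdf m S x * f x := by
    have h1 : ∫ x, gaussPdf m S x * f x ∂(Measure.map T volume)
        = ∫ u, gaussPdf m S (T u) * f (T u) :=
      integral_map hTcont.measurable.aemeasurable hgcont.aestronglyMeasurable
    rw [hmap, integral_smul_measure, ENNReal.toReal_ofReal (abs_nonneg _)] at h1
    rw [← h1]
    simp
  -- pdf at T u
  have hBSB : B * S⁻¹ * B = 1 := by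
    rw [← hBB, Matrix.mul_inv_rev]
    calc B * (B⁻¹ * B⁻¹) * B = (B * B⁻¹) * (B⁻¹ * B) := by
          rw [Matrix.mul_assoc, Matrix.mul_assoc, Matrix.mul_assoc]
      _ = 1 := by rw [Matrix.mul_nonsing_inv _ hBu, Matrix.nonsing_inv_mul _ hBu, Matrix.one_mul]
  have hpdfT : ∀ u : E d, gaussPdf m S (T u)
      = (Real.sqrt ((2 * π) ^ d * S.det))⁻¹ * Real.exp (-(1/2 : ℝ) * ‖u‖ ^ 2) := by
    intro u
    unfold gaussPdf
    congr 2
    have h0 : T u - m = (Matrix.toEuclideanLin B) u := by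
      rw [hTu u]; simp
    rw [h0]
    have h1 : ⟪(Matrix.toEuclideanLin B) u, (Matrix.toEuclideanLin S⁻¹)
        ((Matrix.toEuclideanLin B) u)⟫
        = ⟪u, (Matrix.toEuclideanLin (Bᵀ * (S⁻¹ * B))) u⟫ := by
      rw [inner_toEuclideanLin_left, toEuclideanLin_mul_apply, toEuclideanLin_mul_apply]
    rw [h1]
    have h2 : Bᵀ * (S⁻¹ * B) = 1 := by
      rw [msqrt_transpose hS.posSemidef, ← Matrix.mul_assoc]
      exact hBSB
    rw [h2, toEuclideanLin_one_apply, real_inner_self_eq_norm_sq]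
  -- put everything together
  rw [integral_gaussian_density m S f]
  have hEq : ∫ x, gaussPdf m S x * f x
      = B.det * ∫ u : E d, gaussPdf m S (T u) * f (T u) := by
    rw [hint, ← mul_assoc, abs_of_pos (inv_pos.mpr hBdet), mul_inv_cancel₀ hBdet.ne', one_mul]
  rw [hEq]
  have hgT : ∀ u : E d, gaussPdf m S (T u) * f (T u)
      = (Real.sqrt ((2 * π) ^ d * S.det))⁻¹ *
        (f (m + (Matrix.toEuclideanLin B) u) * Real.exp (-(1/2 : ℝ) * ‖u‖ ^ 2)) := by
    intro u
    rw [hpdfT u, hTu u]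
    ring
  simp only [hgT]
  rw [integral_const_mul, ← mul_assoc]
  have hconst : B.det * (Real.sqrt ((2 * π) ^ d * S.det))⁻¹ = (Real.sqrt (2 * π) ^ d)⁻¹ := by
    rw [Real.sqrt_mul (by positivity), real_sqrt_pow (by positivity : (0:ℝ) ≤ 2 * π),
      msqrt_det_eq_sqrt hS]
    have hs : (0:ℝ) < Real.sqrt S.det := Real.sqrt_pos.mpr hSdet
    field_simp
  rw [hconst]

lemma integral_inner_gaussian (m : E d) {S : Mat d} (hS : S.PosDef) (C D : Mat d) (c : E d) :
    ∫ x, ⟪(Matrix.toEuclideanLin C) (x - m), c + (Matrix.toEuclideanLin D) (x - m)⟫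
        ∂ gaussian m S
      = (Cᵀ * D * S).trace := by
  set B := msqrt S with hBdef
  have hBB : B * B = S := msqrt_mul_self hS.posSemidef
  have hBt : Bᵀ = B := msqrt_transpose hS.posSemidef
  have hfc : Continuous (fun x : E d =>
      ⟪(Matrix.toEuclideanLin C) (x - m), c + (Matrix.toEuclideanLin D) (x - m)⟫) := by
    apply Continuous.inner
    · exact (LinearMap.continuous_of_finiteDimensional _).comp
        (continuous_id.sub continuous_const)
    · exact continuous_const.add ((LinearMap.continuous_of_finiteDimensional _).comp
        (continuous_id.sub continuous_const))
  rw [integral_gaussian_change m hS _ hfc]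
  have hpt : ∀ u : E d,
      ⟪(Matrix.toEuclideanLin C) ((m + (Matrix.toEuclideanLin B) u) - m),
        c + (Matrix.toEuclideanLin D) ((m + (Matrix.toEuclideanLin B) u) - m)⟫
      = (∑ k, (∑ i, (C * B) i k * c i) * u k)
        + ∑ k, ∑ l, ((C * B)ᵀ * (D * B)) k l * (u k * u l) := by
    intro u
    have h0 : (m + (Matrix.toEuclideanLin B) u) - m = (Matrix.toEuclideanLin B) u := by simp
    rw [h0, ← toEuclideanLin_mul_apply, ← toEuclideanLin_mul_apply]
    exact inner_expand (C * B) (D * B) c u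
  simp only [← hBdef, hpt]
  rw [std_integral (fun k => ∑ i, (C * B) i k * c i) ((C * B)ᵀ * (D * B))]
  rw [mul_comm (((C * B)ᵀ * (D * B)).trace) (Real.sqrt (2 * π) ^ d), ← mul_assoc,
    inv_mul_cancel₀ (by positivity : Real.sqrt (2 * π) ^ d ≠ 0), one_mul]
  rw [Matrix.transpose_mul, hBt]
  rw [show (B * Cᵀ) * (D * B) = B * ((Cᵀ * D) * B) by simp only [Matrix.mul_assoc]]
  rw [Matrix.trace_mul_comm, Matrix.mul_assoc, hBB]

end AuxAll

/-- convexity of the entropy along generalized geodesics in BW space: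
`H(μ₀) + ∫⟪−Σ₀⁻¹(T₀(x) − m₀), T₁(x) − T₀(x)⟫ dν(x) ≤ H(μ₁)` where `T₀, T₁` are the
optimal transport maps from `ν` to `μ₀, μ₁`. -/
theorem statement2 (d : ℕ) (mν m0 m1 : E d) (Sν S0 S1 : Mat d)
    (hν : Sν.PosDef) (h0 : S0.PosDef) (h1 : S1.PosDef) :
    negEnt S0 +
        ∫ x, ⟪-((S0⁻¹).toEuclideanLin (otMap mν m0 Sν S0 x - m0)),
          otMap mν m1 Sν S1 x - otMap mν m0 Sν S0 x⟫ ∂ gaussian mν Sν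
      ≤ negEnt S1 := by
  classical
  have hBpd : (msqrt Sν).PosDef := msqrt_posDef hν
  have hBB : msqrt Sν * msqrt Sν = Sν := msqrt_mul_self hν.posSemidef
  have hBt : (msqrt Sν)ᵀ = msqrt Sν := msqrt_transpose hν.posSemidef
  have hBu : IsUnit (msqrt Sν).det := hBpd.det_pos.ne'.isUnit
  have hBSB : ∀ {S : Mat d}, S.PosDef → (msqrt Sν * S * msqrt Sν).PosDef := by
    intro S hS
    have hps : (msqrt Sν * S * (msqrt Sν)ᴴ).PosSemidef :=
      hS.posSemidef.mul_mul_conjTranspose_same (msqrt Sν)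
    rw [Matrix.conjTranspose_eq_transpose_of_trivial, hBt] at hps
    refine posDef_of_posSemidef_det_ne_zero hps ?_
    rw [Matrix.det_mul, Matrix.det_mul]
    exact mul_ne_zero (mul_ne_zero hBpd.det_pos.ne' hS.det_pos.ne') hBpd.det_pos.ne'
  have hBS0B : (msqrt Sν * S0 * msqrt Sν).PosDef := hBSB h0
  have hBS1B : (msqrt Sν * S1 * msqrt Sν).PosDef := hBSB h1
  -- rewrite the integrand
  have hintg : ∀ x : E d,
      ⟪-((S0⁻¹).toEuclideanLin (otMap mν m0 Sν S0 x - m0)),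
          otMap mν m1 Sν S1 x - otMap mν m0 Sν S0 x⟫
      = ⟪(Matrix.toEuclideanLin
            (-(S0⁻¹ * ((msqrt Sν)⁻¹ * msqrt (msqrt Sν * S0 * msqrt Sν) * (msqrt Sν)⁻¹))))
            (x - mν),
          (m1 - m0) + (Matrix.toEuclideanLin
            ((msqrt Sν)⁻¹ * msqrt (msqrt Sν * S1 * msqrt Sν) * (msqrt Sν)⁻¹
              - (msqrt Sν)⁻¹ * msqrt (msqrt Sν * S0 * msqrt Sν) * (msqrt Sν)⁻¹)) (x - mν)⟫ := by
    intro x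
    have e0 : otMap mν m0 Sν S0 x - m0
        = (Matrix.toEuclideanLin
            ((msqrt Sν)⁻¹ * msqrt (msqrt Sν * S0 * msqrt Sν) * (msqrt Sν)⁻¹)) (x - mν) := by
      unfold otMap
      rw [add_sub_cancel_left]
    have e1 : otMap mν m1 Sν S1 x - otMap mν m0 Sν S0 x
        = (m1 - m0) + (Matrix.toEuclideanLin
            ((msqrt Sν)⁻¹ * msqrt (msqrt Sν * S1 * msqrt Sν) * (msqrt Sν)⁻¹
              - (msqrt Sν)⁻¹ * msqrt (msqrt Sν * S0 * msqrt Sν) * (msqrt Sν)⁻¹)) (x - mν) := by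
      have hsub : Matrix.toEuclideanLin
            ((msqrt Sν)⁻¹ * msqrt (msqrt Sν * S1 * msqrt Sν) * (msqrt Sν)⁻¹
              - (msqrt Sν)⁻¹ * msqrt (msqrt Sν * S0 * msqrt Sν) * (msqrt Sν)⁻¹)
          = Matrix.toEuclideanLin ((msqrt Sν)⁻¹ * msqrt (msqrt Sν * S1 * msqrt Sν) * (msqrt Sν)⁻¹)
            - Matrix.toEuclideanLin
              ((msqrt Sν)⁻¹ * msqrt (msqrt Sν * S0 * msqrt Sν) * (msqrt Sν)⁻¹) :=
        map_sub _ _ _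
      unfold otMap
      rw [hsub, LinearMap.sub_apply]
      abel
    have e2 : -((S0⁻¹).toEuclideanLin ((Matrix.toEuclideanLin
          ((msqrt Sν)⁻¹ * msqrt (msqrt Sν * S0 * msqrt Sν) * (msqrt Sν)⁻¹)) (x - mν)))
        = (Matrix.toEuclideanLin
            (-(S0⁻¹ * ((msqrt Sν)⁻¹ * msqrt (msqrt Sν * S0 * msqrt Sν) * (msqrt Sν)⁻¹))))
            (x - mν) := by
      have hneg : Matrix.toEuclideanLin
            (-(S0⁻¹ * ((msqrt Sν)⁻¹ * msqrt (msqrt Sν * S0 * msqrt Sν) * (msqrt Sν)⁻¹)))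
          = -(Matrix.toEuclideanLin
              (S0⁻¹ * ((msqrt Sν)⁻¹ * msqrt (msqrt Sν * S0 * msqrt Sν) * (msqrt Sν)⁻¹))) :=
        map_neg _ _
      rw [hneg, LinearMap.neg_apply]
      simp only [toEuclideanLin_mul_apply]
    rw [e0, e1, ← e2]
  simp only [hintg]
  rw [integral_inner_gaussian mν hν]
  -- now pure matrix algebra
  set B := msqrt Sν with hBdef
  set P := msqrt (B * S0 * B) with hPdef
  set Q := msqrt (B * S1 * B) with hQdef
  have hPpd : P.PosDef := msqrt_posDef hBS0B
  have hQpd : Q.PosDef := msqrt_posDef hBS1B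
  have hPP : P * P = B * S0 * B := msqrt_mul_self hBS0B.posSemidef
  have hQQ : Q * Q = B * S1 * B := msqrt_mul_self hBS1B.posSemidef
  have hPt : Pᵀ = P := msqrt_transpose hBS0B.posSemidef
  have hPu : IsUnit P.det := hPpd.det_pos.ne'.isUnit
  have hQu : IsUnit Q.det := hQpd.det_pos.ne'.isUnit
  have hS0t : S0ᵀ = S0 := by
    have := h0.isHermitian
    rwa [Matrix.IsHermitian, Matrix.conjTranspose_eq_transpose_of_trivial] at this
  set A0 : Mat d := B⁻¹ * P * B⁻¹ with hA0def
  set A1 : Mat d := B⁻¹ * Q * B⁻¹ with hA1def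
  have hA0t : A0ᵀ = A0 := by
    rw [hA0def, Matrix.transpose_mul, Matrix.transpose_mul, Matrix.transpose_nonsing_inv,
      hBt, hPt, Matrix.mul_assoc]
  have hS0eq : S0 = B⁻¹ * (P * P) * B⁻¹ := by
    rw [hPP]
    calc S0 = (B⁻¹ * B) * S0 * (B * B⁻¹) := by
          rw [Matrix.nonsing_inv_mul _ hBu, Matrix.mul_nonsing_inv _ hBu, Matrix.one_mul,
            Matrix.mul_one]
      _ = B⁻¹ * (B * S0 * B) * B⁻¹ := by simp only [Matrix.mul_assoc]
  have hinvS0 : S0⁻¹ = B * (P⁻¹ * P⁻¹) * B := by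
    rw [hS0eq, Matrix.mul_inv_rev, Matrix.mul_inv_rev, Matrix.nonsing_inv_nonsing_inv _ hBu,
      Matrix.mul_inv_rev]
    simp only [Matrix.mul_assoc]
  have hA0S0 : A0 * S0⁻¹ = B⁻¹ * P⁻¹ * B := by
    rw [hinvS0, hA0def]
    calc (B⁻¹ * P * B⁻¹) * (B * (P⁻¹ * P⁻¹) * B)
        = B⁻¹ * (P * ((B⁻¹ * B) * (P⁻¹ * (P⁻¹ * B)))) := by simp only [Matrix.mul_assoc]
      _ = B⁻¹ * (P * (P⁻¹ * (P⁻¹ * B))) := by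
          rw [Matrix.nonsing_inv_mul _ hBu, Matrix.one_mul]
      _ = B⁻¹ * ((P * P⁻¹) * (P⁻¹ * B)) := by simp only [Matrix.mul_assoc]
      _ = B⁻¹ * (P⁻¹ * B) := by rw [Matrix.mul_nonsing_inv _ hPu, Matrix.one_mul]
      _ = B⁻¹ * P⁻¹ * B := by rw [Matrix.mul_assoc]
  have e1 : A0 * S0⁻¹ * A1 * Sν = B⁻¹ * (P⁻¹ * Q) * B := by
    rw [show A0 * S0⁻¹ * A1 * Sν = (A0 * S0⁻¹) * (A1 * Sν) from by simp only [Matrix.mul_assoc],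
      hA0S0, hA1def, ← hBB]
    calc (B⁻¹ * P⁻¹ * B) * ((B⁻¹ * Q * B⁻¹) * (B * B))
        = B⁻¹ * (P⁻¹ * ((B * B⁻¹) * (Q * ((B⁻¹ * B) * B)))) := by simp only [Matrix.mul_assoc]
      _ = B⁻¹ * (P⁻¹ * (Q * B)) := by
          rw [Matrix.mul_nonsing_inv _ hBu, Matrix.nonsing_inv_mul _ hBu, Matrix.one_mul,
            Matrix.one_mul]
      _ = B⁻¹ * (P⁻¹ * Q) * B := by simp only [Matrix.mul_assoc]
  have e2 : A0 * S0⁻¹ * A0 * Sν = 1 := by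
    rw [show A0 * S0⁻¹ * A0 * Sν = (A0 * S0⁻¹) * (A0 * Sν) from by simp only [Matrix.mul_assoc],
      hA0S0, hA0def, ← hBB]
    calc (B⁻¹ * P⁻¹ * B) * ((B⁻¹ * P * B⁻¹) * (B * B))
        = B⁻¹ * ((P⁻¹ * ((B * B⁻¹) * P)) * ((B⁻¹ * B) * B)) := by simp only [Matrix.mul_assoc]
      _ = B⁻¹ * ((P⁻¹ * P) * B) := by
          rw [Matrix.mul_nonsing_inv _ hBu, Matrix.nonsing_inv_mul _ hBu, Matrix.one_mul,
            Matrix.one_mul, Matrix.mul_assoc]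
      _ = B⁻¹ * B := by rw [Matrix.nonsing_inv_mul _ hPu, Matrix.one_mul]
      _ = 1 := Matrix.nonsing_inv_mul _ hBu
  have keytrace : ((-(S0⁻¹ * A0))ᵀ * (A1 - A0) * Sν).trace = (d : ℝ) - (P⁻¹ * Q).trace := by
    have ht : (-(S0⁻¹ * A0))ᵀ = -(A0 * S0⁻¹) := by
      rw [Matrix.transpose_neg, Matrix.transpose_mul, hA0t, Matrix.transpose_nonsing_inv, hS0t]
    rw [ht]
    have hexp : -(A0 * S0⁻¹) * (A1 - A0) * Sν
        = A0 * S0⁻¹ * A0 * Sν - A0 * S0⁻¹ * A1 * Sν := by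
      rw [Matrix.neg_mul, Matrix.neg_mul, Matrix.mul_sub, Matrix.sub_mul]
      rw [neg_sub]
    rw [hexp, e1, e2]
    rw [Matrix.trace_sub, Matrix.trace_one]
    congr 1
    · simp
    · rw [Matrix.trace_mul_cycle, Matrix.mul_nonsing_inv _ hBu, Matrix.one_mul]
  rw [keytrace]
  -- final inequality via log-det
  set R := msqrt P⁻¹ with hRdef
  have hPinv : P⁻¹.PosDef := hPpd.inv
  have hRpd : R.PosDef := msqrt_posDef hPinv
  have hRR : R * R = P⁻¹ := msqrt_mul_self hPinv.posSemidef
  have hRt : Rᵀ = R := msqrt_transpose hPinv.posSemidef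
  have hMpd : (R * Q * R).PosDef := by
    have hps : (R * Q * Rᴴ).PosSemidef := hQpd.posSemidef.mul_mul_conjTranspose_same R
    rw [Matrix.conjTranspose_eq_transpose_of_trivial, hRt] at hps
    refine posDef_of_posSemidef_det_ne_zero hps ?_
    rw [Matrix.det_mul, Matrix.det_mul]
    exact mul_ne_zero (mul_ne_zero hRpd.det_pos.ne' hQpd.det_pos.ne') hRpd.det_pos.ne'
  have htrM : (R * Q * R).trace = (P⁻¹ * Q).trace := by
    rw [Matrix.trace_mul_cycle, hRR]
  have hdetM : (R * Q * R).det = P⁻¹.det * Q.det := by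
    rw [Matrix.det_mul, Matrix.det_mul]
    have : R.det * Q.det * R.det = (R.det * R.det) * Q.det := by ring
    rw [this, msqrt_det_sq hPinv.posSemidef]
  have hlog : Real.log (P⁻¹.det * Q.det) ≤ (P⁻¹ * Q).trace - d := by
    have h := log_det_le_trace_sub hMpd
    rwa [hdetM, htrM] at h
  have hdetPinv : P⁻¹.det = (P.det)⁻¹ := by
    rw [Matrix.det_nonsing_inv, Ring.inverse_eq_inv']
  -- scalar bookkeeping
  have hb : (0:ℝ) < (msqrt Sν).det := hBpd.det_pos
  have hp : (0:ℝ) < P.det := hPpd.det_pos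
  have hq : (0:ℝ) < Q.det := hQpd.det_pos
  have hs0 : (0:ℝ) < S0.det := h0.det_pos
  have hs1 : (0:ℝ) < S1.det := h1.det_pos
  have dP : P.det * P.det = B.det * S0.det * B.det := by
    rw [← Matrix.det_mul, ← Matrix.det_mul, ← Matrix.det_mul, hPP]
  have dQ : Q.det * Q.det = B.det * S1.det * B.det := by
    rw [← Matrix.det_mul, ← Matrix.det_mul, ← Matrix.det_mul, hQQ]
  have hlogP : 2 * Real.log P.det = 2 * Real.log (msqrt Sν).det + Real.log S0.det := by
    have h := congrArg Real.log dP
    rw [Real.log_mul hp.ne' hp.ne', Real.log_mul (mul_ne_zero hb.ne' hs0.ne') hb.ne',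
      Real.log_mul hb.ne' hs0.ne'] at h
    linarith
  have hlogQ : 2 * Real.log Q.det = 2 * Real.log (msqrt Sν).det + Real.log S1.det := by
    have h := congrArg Real.log dQ
    rw [Real.log_mul hq.ne' hq.ne', Real.log_mul (mul_ne_zero hb.ne' hs1.ne') hb.ne',
      Real.log_mul hb.ne' hs1.ne'] at h
    linarith
  have hlogPQ : Real.log (P⁻¹.det * Q.det) = Real.log Q.det - Real.log P.det := by
    rw [Real.log_mul (by rw [hdetPinv]; exact (inv_pos.mpr hp).ne') hq.ne', hdetPinv,
      Real.log_inv]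
    ring
  have ha : (0:ℝ) < (2 * π * Real.exp 1) ^ d := by positivity
  unfold negEnt
  have hL0 : Real.log ((2 * π * Real.exp 1) ^ d * S0.det)
      = Real.log ((2 * π * Real.exp 1) ^ d) + Real.log S0.det :=
    Real.log_mul ha.ne' hs0.ne'
  have hL1 : Real.log ((2 * π * Real.exp 1) ^ d * S1.det)
      = Real.log ((2 * π * Real.exp 1) ^ d) + Real.log S1.det :=
    Real.log_mul ha.ne' hs1.ne'
  rw [hL0, hL1]
  rw [hlogPQ] at hlog
  linarith


end
end

section
/- Let 0 < γ_0 ≤ γ_1, let Σ be a d×d positive definite matrix with γ_0 I ⪯ Σ^{-1} ⪯ γ_1 I, let S be a d×d symmetric matrix with γ_0 I ⪯ S ⪯ γ_1 I, and let 0 ≤ η ≤ 1/γ_1. Define Σ' = (I − ηS) Σ (I − ηS) and Σ'' = (1/2)(Σ' + 2ηI + (Σ'(Σ' + 4ηI))^{1/2}), where the square root is the principal positive semidefinite root. Then γ_1^{-1} I ⪯ Σ'' ⪯ γ_0^{-1} I. -/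
open MeasureTheory Matrix Real Filter
open scoped RealInnerProductSpace ENNReal NNReal

noncomputable section

variable {d : ℕ}

/-! ### Auxiliary machinery: functions of a Hermitian matrix via spectral decomposition -/

section Aux

open Matrix

/-- Apply a real function to a Hermitian matrix through its eigenvalues. -/
def mfun {A : Mat d} (hA : A.IsHermitian) (f : ℝ → ℝ) : Mat d :=
  (hA.eigenvectorUnitary : Mat d) * Matrix.diagonal (f ∘ hA.eigenvalues) *
    star (hA.eigenvectorUnitary : Mat d)

variable {A : Mat d} (hA : A.IsHermitian)

lemma mfun_congr {f g : ℝ → ℝ} (h : ∀ i, f (hA.eigenvalues i) = g (hA.eigenvalues i)) :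
    mfun hA f = mfun hA g := by
  unfold mfun
  congr 2
  exact congrArg Matrix.diagonal (funext fun i => h i)

lemma mfun_id : mfun hA (fun x => x) = A := by
  conv_rhs => rw [hA.spectral_theorem]
  unfold mfun
  congr 2

lemma mfun_const (c : ℝ) : mfun hA (fun _ => c) = c • (1 : Mat d) := by
  unfold mfun
  have hd : Matrix.diagonal ((fun _ => c) ∘ hA.eigenvalues) = c • (1 : Mat d) := by
    ext i j
    by_cases h : i = j <;>
      simp [Matrix.diagonal_apply, Matrix.one_apply, h]
  rw [hd]
  simp [Matrix.mul_smul, Matrix.smul_mul, Matrix.mem_unitaryGroup_iff.mp hA.eigenvectorUnitary.2]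

lemma mfun_add (f g : ℝ → ℝ) : mfun hA f + mfun hA g = mfun hA (f + g) := by
  unfold mfun
  rw [← Matrix.add_mul, ← Matrix.mul_add, Matrix.diagonal_add]
  congr 2

lemma mfun_sub (f g : ℝ → ℝ) : mfun hA f - mfun hA g = mfun hA (f - g) := by
  unfold mfun
  rw [← Matrix.sub_mul, ← Matrix.mul_sub, Matrix.diagonal_sub]
  congr 2

lemma mfun_smul (c : ℝ) (f : ℝ → ℝ) : c • mfun hA f = mfun hA (fun x => c * f x) := by
  unfold mfun
  rw [← Matrix.smul_mul, ← Matrix.mul_smul, ← Matrix.diagonal_smul]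
  congr 2

lemma mfun_mul (f g : ℝ → ℝ) : mfun hA f * mfun hA g = mfun hA (fun x => f x * g x) := by
  unfold mfun
  have h1 : star (hA.eigenvectorUnitary : Mat d) * (hA.eigenvectorUnitary : Mat d) = 1 :=
    Matrix.mem_unitaryGroup_iff'.mp hA.eigenvectorUnitary.2
  simp only [Matrix.mul_assoc]
  rw [show star (hA.eigenvectorUnitary : Mat d) *
      ((hA.eigenvectorUnitary : Mat d) *
        (Matrix.diagonal (g ∘ hA.eigenvalues) * star (hA.eigenvectorUnitary : Mat d))) =
      Matrix.diagonal (g ∘ hA.eigenvalues) * star (hA.eigenvectorUnitary : Mat d) by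
    rw [← Matrix.mul_assoc, h1, Matrix.one_mul]]
  rw [← Matrix.mul_assoc (Matrix.diagonal (f ∘ hA.eigenvalues)), Matrix.diagonal_mul_diagonal]
  congr 2

lemma mfun_posSemidef {f : ℝ → ℝ} (h : ∀ i, 0 ≤ f (hA.eigenvalues i)) :
    (mfun hA f).PosSemidef := by
  have hd : (Matrix.diagonal (f ∘ hA.eigenvalues)).PosSemidef :=
    Matrix.posSemidef_diagonal_iff.mpr h
  simpa [mfun, Matrix.star_eq_conjTranspose] using
    hd.mul_mul_conjTranspose_same (hA.eigenvectorUnitary : Mat d)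

lemma mfun_isHermitian (f : ℝ → ℝ) : (mfun hA f).IsHermitian := by
  have hd : (Matrix.diagonal (f ∘ hA.eigenvalues)).IsHermitian :=
    Matrix.isHermitian_diagonal _
  simpa [mfun, Matrix.star_eq_conjTranspose] using
    Matrix.isHermitian_mul_mul_conjTranspose (hA.eigenvectorUnitary : Mat d) hd

lemma mfun_nonneg_of_posSemidef {f : ℝ → ℝ} (h : (mfun hA f).PosSemidef) :
    ∀ i, 0 ≤ f (hA.eigenvalues i) := by
  have h1 : star (hA.eigenvectorUnitary : Mat d) * (hA.eigenvectorUnitary : Mat d) = 1 :=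
    Matrix.mem_unitaryGroup_iff'.mp hA.eigenvectorUnitary.2
  have key : star (hA.eigenvectorUnitary : Mat d) * mfun hA f * (hA.eigenvectorUnitary : Mat d) =
      Matrix.diagonal (f ∘ hA.eigenvalues) := by
    simp only [mfun, Matrix.mul_assoc, h1, Matrix.mul_one]
    rw [← Matrix.mul_assoc, h1, Matrix.one_mul]
  have h2 := h.conjTranspose_mul_mul_same (hA.eigenvectorUnitary : Mat d)
  rw [show ((hA.eigenvectorUnitary : Mat d))ᴴ = star (hA.eigenvectorUnitary : Mat d) from rfl,
    key] at h2
  exact Matrix.posSemidef_diagonal_iff.mp h2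

lemma loewner_mfun {f g : ℝ → ℝ} (h : ∀ i, f (hA.eigenvalues i) ≤ g (hA.eigenvalues i)) :
    Loewner (mfun hA f) (mfun hA g) := by
  show (mfun hA g - mfun hA f).PosSemidef
  rw [mfun_sub]
  exact mfun_posSemidef hA fun i => sub_nonneg.mpr (h i)

lemma le_of_loewner_mfun {f g : ℝ → ℝ} (h : Loewner (mfun hA f) (mfun hA g)) :
    ∀ i, f (hA.eigenvalues i) ≤ g (hA.eigenvalues i) := by
  have h' : (mfun hA (g - f)).PosSemidef := by
    rw [← mfun_sub]; exact h
  intro i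
  have := mfun_nonneg_of_posSemidef hA h' i
  simpa [sub_nonneg] using this

end Aux

section RealLemmas

lemma psi_lower {γ η μ : ℝ} (hγ : 0 < γ) (hη : 0 ≤ η) (hμ0 : 0 ≤ μ)
    (hμ : γ * (γ⁻¹ - η)^2 ≤ μ) :
    γ⁻¹ ≤ (1/2) * (μ + 2*η + Real.sqrt (μ * (μ + 4*η))) := by
  have hs0 : 0 ≤ Real.sqrt (μ * (μ + 4*η)) := Real.sqrt_nonneg _
  have hs : Real.sqrt (μ * (μ + 4*η)) ^ 2 = μ * (μ + 4*η) :=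
    Real.sq_sqrt (by positivity)
  have hinv : γ * γ⁻¹ = 1 := mul_inv_cancel₀ (ne_of_gt hγ)
  have hinv0 : 0 ≤ γ⁻¹ := inv_nonneg.mpr hγ.le
  suffices h : 2*γ⁻¹ - 2*η - μ ≤ Real.sqrt (μ * (μ + 4*η)) by linarith
  rcases le_or_gt (2*γ⁻¹ - 2*η - μ) 0 with h' | h'
  · linarith
  · have h1 : γ⁻¹ * (γ * (γ⁻¹ - η)^2) ≤ γ⁻¹ * μ :=
      mul_le_mul_of_nonneg_left hμ hinv0
    have h1' : (γ⁻¹ - η)^2 ≤ γ⁻¹ * μ := by nlinarith [h1, hinv]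
    have hsq2 : (2*γ⁻¹ - 2*η - μ)^2 ≤ Real.sqrt (μ * (μ + 4*η)) ^ 2 := by
      rw [hs]; nlinarith [h1']
    exact le_of_pow_le_pow_left₀ two_ne_zero hs0 hsq2

lemma psi_upper {γ η μ : ℝ} (hγ : 0 < γ) (hη : 0 ≤ η) (hηγ : η ≤ 1/γ) (hμ0 : 0 ≤ μ)
    (hμ : μ ≤ γ * (γ⁻¹ - η)^2) :
    (1/2) * (μ + 2*η + Real.sqrt (μ * (μ + 4*η))) ≤ γ⁻¹ := by
  have hinv : γ * γ⁻¹ = 1 := mul_inv_cancel₀ (ne_of_gt hγ)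
  have hinv0 : 0 ≤ γ⁻¹ := inv_nonneg.mpr hγ.le
  have hu : 0 ≤ γ⁻¹ - η := by rw [inv_eq_one_div]; linarith
  have h2 : γ * (γ⁻¹ - η) ≤ 1 := by nlinarith [hinv, mul_nonneg hγ.le hη]
  have hbR : γ * (γ⁻¹ - η)^2 ≤ 2 * (γ⁻¹ - η) := by
    nlinarith [mul_le_mul_of_nonneg_right h2 hu, hu]
  have hR0 : 0 ≤ 2*γ⁻¹ - 2*η - μ := by nlinarith [hμ, hbR]
  have h1 : γ⁻¹ * μ ≤ γ⁻¹ * (γ * (γ⁻¹ - η)^2) := mul_le_mul_of_nonneg_left hμ hinv0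
  have h1' : γ⁻¹ * μ ≤ (γ⁻¹ - η)^2 := by nlinarith [h1, hinv]
  have hs : Real.sqrt (μ * (μ + 4*η)) ≤ 2*γ⁻¹ - 2*η - μ := by
    rw [show 2*γ⁻¹ - 2*η - μ = Real.sqrt ((2*γ⁻¹ - 2*η - μ)^2) from (Real.sqrt_sq hR0).symm]
    apply Real.sqrt_le_sqrt
    nlinarith [h1']
  linarith

end RealLemmas

/-- eigenvalue control of one composite FB–GVI step on covariances:
if `γ₀ I ⪯ Σ⁻¹ ⪯ γ₁ I`, `γ₀ I ⪯ S ⪯ γ₁ I` with `S` symmetric and `0 ≤ η ≤ 1/γ₁`, then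
the updated covariance `Σ''` satisfies `γ₁⁻¹ I ⪯ Σ'' ⪯ γ₀⁻¹ I`. -/
theorem statement4 (d : ℕ) (γ0 γ1 : ℝ) (hγ0 : 0 < γ0) (hγ01 : γ0 ≤ γ1)
    (S : Mat d) (hS : S.PosDef)
    (hSl : Loewner (γ0 • (1 : Mat d)) S⁻¹) (hSu : Loewner S⁻¹ (γ1 • (1 : Mat d)))
    (M : Mat d) (hM : M.IsSymm)
    (hMl : Loewner (γ0 • (1 : Mat d)) M) (hMu : Loewner M (γ1 • (1 : Mat d)))
    (η : ℝ) (hη0 : 0 ≤ η) (hη1 : η ≤ 1 / γ1) :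
    Loewner (γ1⁻¹ • (1 : Mat d))
        ((1 / 2 : ℝ) • ((1 - η • M) * S * (1 - η • M) + (2 * η) • (1 : Mat d) +
          msqrt ((1 - η • M) * S * (1 - η • M) *
            ((1 - η • M) * S * (1 - η • M) + (4 * η) • 1)))) ∧
    Loewner
        ((1 / 2 : ℝ) • ((1 - η • M) * S * (1 - η • M) + (2 * η) • (1 : Mat d) +
          msqrt ((1 - η • M) * S * (1 - η • M) *
            ((1 - η • M) * S * (1 - η • M) + (4 * η) • 1))))
        (γ0⁻¹ • (1 : Mat d)) := by
  have hγ1 : 0 < γ1 := lt_of_lt_of_le hγ0 hγ01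
  have hγ0ne : γ0 ≠ 0 := ne_of_gt hγ0
  have hγ1ne : γ1 ≠ 0 := ne_of_gt hγ1
  have hinv0 : γ0 * γ0⁻¹ = 1 := mul_inv_cancel₀ hγ0ne
  have hinv1 : γ1 * γ1⁻¹ = 1 := mul_inv_cancel₀ hγ1ne
  have hη1' : η ≤ 1 / γ0 := hη1.trans (one_div_le_one_div_of_le hγ0 hγ01)
  have hc1 : 0 ≤ 1 - η * γ1 := by
    have := (le_div_iff₀ hγ1).mp hη1; linarith
  have hC0 : 0 ≤ 1 - η * γ0 := by
    have := (le_div_iff₀ hγ0).mp hη1'; linarith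
  have hMh : M.IsHermitian := by
    rw [Matrix.IsHermitian, Matrix.conjTranspose_eq_transpose_of_trivial]; exact hM
  -- eigenvalue bounds for M
  have hMl' : ∀ i, γ0 ≤ hMh.eigenvalues i := by
    refine le_of_loewner_mfun hMh (f := fun _ => γ0) (g := fun x => x) ?_
    rw [mfun_const, mfun_id]; exact hMl
  have hMu' : ∀ i, hMh.eigenvalues i ≤ γ1 := by
    refine le_of_loewner_mfun hMh (f := fun x => x) (g := fun _ => γ1) ?_
    rw [mfun_const, mfun_id]; exact hMu
  -- S as a function of S⁻¹, and Loewner bounds for S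
  have hSi : (S⁻¹).PosDef := hS.inv
  have hSih : (S⁻¹).IsHermitian := hSi.1
  have hνl : ∀ i, γ0 ≤ hSih.eigenvalues i := by
    refine le_of_loewner_mfun hSih (f := fun _ => γ0) (g := fun x => x) ?_
    rw [mfun_const, mfun_id]; exact hSl
  have hνu : ∀ i, hSih.eigenvalues i ≤ γ1 := by
    refine le_of_loewner_mfun hSih (f := fun x => x) (g := fun _ => γ1) ?_
    rw [mfun_const, mfun_id]; exact hSu
  have hνpos : ∀ i, 0 < hSih.eigenvalues i := fun i => lt_of_lt_of_le hγ0 (hνl i)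
  have hmul : mfun hSih (fun x => x⁻¹) * S⁻¹ = 1 := by
    have h := mfun_mul hSih (fun x => x⁻¹) (fun x => x)
    rw [mfun_id] at h
    rw [h, mfun_congr hSih (g := fun _ => (1:ℝ))
      (fun i => inv_mul_cancel₀ (ne_of_gt (hνpos i))), mfun_const, one_smul]
  have hSeq : S = mfun hSih (fun x => x⁻¹) := by
    have h := Matrix.inv_eq_left_inv hmul
    rwa [Matrix.nonsing_inv_nonsing_inv S (isUnit_iff_ne_zero.mpr (ne_of_gt hS.det_pos))] at h
  have hSlow : (S - γ1⁻¹ • (1 : Mat d)).PosSemidef := by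
    have : Loewner (γ1⁻¹ • (1 : Mat d)) S := by
      rw [hSeq, show γ1⁻¹ • (1 : Mat d) = mfun hSih (fun _ => γ1⁻¹) from (mfun_const hSih _).symm]
      exact loewner_mfun hSih fun i => inv_anti₀ (hνpos i) (hνu i)
    exact this
  have hSup : (γ0⁻¹ • (1 : Mat d) - S).PosSemidef := by
    have : Loewner S (γ0⁻¹ • (1 : Mat d)) := by
      rw [hSeq, show γ0⁻¹ • (1 : Mat d) = mfun hSih (fun _ => γ0⁻¹) from (mfun_const hSih _).symm]
      exact loewner_mfun hSih fun i => inv_anti₀ hγ0 (hνl i)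
    exact this
  -- the forward factor
  have hA1eq : (1 : Mat d) - η • M = mfun hMh (fun x => 1 - η * x) := by
    have h2 := mfun_smul hMh η (fun x => x)
    rw [mfun_id] at h2
    have h2' : η • M = mfun hMh (fun x => η * x) := h2.trans (mfun_congr hMh fun i => rfl)
    have h1 := mfun_sub hMh (fun _ => (1:ℝ)) (fun x => η * x)
    rw [mfun_const, one_smul] at h1
    rw [h2', h1]
    exact mfun_congr hMh fun i => rfl
  have hA1h : ((1 : Mat d) - η • M).IsHermitian := by
    rw [hA1eq]; exact mfun_isHermitian hMh _
  set Sig := (1 - η • M) * S * (1 - η • M) with hSigdef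
  have hSigh : Sig.IsHermitian := by
    have h := Matrix.isHermitian_mul_mul_conjTranspose (1 - η • M) hS.1
    rwa [hA1h.eq] at h
  -- lower Loewner bound for Sig
  have hlow : (Sig - (γ1 * (γ1⁻¹ - η)^2) • (1 : Mat d)).PosSemidef := by
    have hX : (((1 : Mat d) - η • M) * (S - γ1⁻¹ • (1 : Mat d)) *
        ((1 : Mat d) - η • M)).PosSemidef := by
      have h := hSlow.mul_mul_conjTranspose_same ((1 : Mat d) - η • M)
      rwa [hA1h.eq] at h
    have hY : (mfun hMh (fun x => γ1⁻¹ * (1 - η * x)^2 - γ1 * (γ1⁻¹ - η)^2)).PosSemidef := by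
      refine mfun_posSemidef hMh fun i => ?_
      show 0 ≤ γ1⁻¹ * (1 - η * hMh.eigenvalues i)^2 - γ1 * (γ1⁻¹ - η)^2
      have ht1 := hMu' i
      have hline : 1 - η * γ1 ≤ 1 - η * hMh.eigenvalues i := by nlinarith [hη0]
      have hsq : (1 - η * γ1)^2 ≤ (1 - η * hMh.eigenvalues i)^2 := by nlinarith [hc1, hline]
      have e : γ1 * (γ1⁻¹ - η)^2 = γ1⁻¹ * (1 - η * γ1)^2 := by field_simp
      have h2 := mul_le_mul_of_nonneg_left hsq (inv_nonneg.mpr hγ1.le)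
      linarith [e ▸ h2]
    have hm2 : γ1⁻¹ • (((1 : Mat d) - η • M) * ((1 : Mat d) - η • M)) -
        (γ1 * (γ1⁻¹ - η)^2) • (1 : Mat d)
        = mfun hMh (fun x => γ1⁻¹ * (1 - η * x)^2 - γ1 * (γ1⁻¹ - η)^2) := by
      rw [hA1eq, mfun_mul, mfun_smul,
        show (γ1 * (γ1⁻¹ - η)^2) • (1 : Mat d) = mfun hMh (fun _ => γ1 * (γ1⁻¹ - η)^2) from
          (mfun_const hMh _).symm, mfun_sub]
      exact mfun_congr hMh fun i => by simp only [Pi.sub_apply]; ring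
    have hsum : Sig - (γ1 * (γ1⁻¹ - η)^2) • (1 : Mat d) =
        ((1 : Mat d) - η • M) * (S - γ1⁻¹ • (1 : Mat d)) * ((1 : Mat d) - η • M) +
        (γ1⁻¹ • (((1 : Mat d) - η • M) * ((1 : Mat d) - η • M)) -
          (γ1 * (γ1⁻¹ - η)^2) • (1 : Mat d)) := by
      rw [hSigdef]
      simp only [mul_sub, sub_mul, Matrix.mul_smul, Matrix.smul_mul, mul_one, one_mul]
      module
    rw [hsum, hm2]
    exact hX.add hY
  -- upper Loewner bound for Sig
  have hup : ((γ0 * (γ0⁻¹ - η)^2) • (1 : Mat d) - Sig).PosSemidef := by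
    have hX : (((1 : Mat d) - η • M) * (γ0⁻¹ • (1 : Mat d) - S) *
        ((1 : Mat d) - η • M)).PosSemidef := by
      have h := hSup.mul_mul_conjTranspose_same ((1 : Mat d) - η • M)
      rwa [hA1h.eq] at h
    have hY : (mfun hMh (fun x => γ0 * (γ0⁻¹ - η)^2 - γ0⁻¹ * (1 - η * x)^2)).PosSemidef := by
      refine mfun_posSemidef hMh fun i => ?_
      show 0 ≤ γ0 * (γ0⁻¹ - η)^2 - γ0⁻¹ * (1 - η * hMh.eigenvalues i)^2
      have ht0 := hMl' i
      have ht1 := hMu' i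
      have hnn : 0 ≤ 1 - η * hMh.eigenvalues i := by nlinarith [hη0, hc1]
      have hline : 1 - η * hMh.eigenvalues i ≤ 1 - η * γ0 := by nlinarith [hη0]
      have hsq : (1 - η * hMh.eigenvalues i)^2 ≤ (1 - η * γ0)^2 := by nlinarith [hnn, hline]
      have e : γ0 * (γ0⁻¹ - η)^2 = γ0⁻¹ * (1 - η * γ0)^2 := by field_simp
      have h2 := mul_le_mul_of_nonneg_left hsq (inv_nonneg.mpr hγ0.le)
      linarith [e ▸ h2]
    have hm2 : (γ0 * (γ0⁻¹ - η)^2) • (1 : Mat d) -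
        γ0⁻¹ • (((1 : Mat d) - η • M) * ((1 : Mat d) - η • M))
        = mfun hMh (fun x => γ0 * (γ0⁻¹ - η)^2 - γ0⁻¹ * (1 - η * x)^2) := by
      rw [hA1eq, mfun_mul, mfun_smul,
        show (γ0 * (γ0⁻¹ - η)^2) • (1 : Mat d) = mfun hMh (fun _ => γ0 * (γ0⁻¹ - η)^2) from
          (mfun_const hMh _).symm, mfun_sub]
      exact mfun_congr hMh fun i => by simp only [Pi.sub_apply]; ring
    have hsum : (γ0 * (γ0⁻¹ - η)^2) • (1 : Mat d) - Sig =
        ((1 : Mat d) - η • M) * (γ0⁻¹ • (1 : Mat d) - S) * ((1 : Mat d) - η • M) +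
        ((γ0 * (γ0⁻¹ - η)^2) • (1 : Mat d) -
          γ0⁻¹ • (((1 : Mat d) - η • M) * ((1 : Mat d) - η • M))) := by
      rw [hSigdef]
      simp only [mul_sub, sub_mul, Matrix.mul_smul, Matrix.smul_mul, mul_one, one_mul]
      module
    rw [hsum, hm2]
    exact hX.add hY
  -- eigenvalue bounds for Sig
  have hμl : ∀ i, γ1 * (γ1⁻¹ - η)^2 ≤ hSigh.eigenvalues i := by
    refine le_of_loewner_mfun hSigh (f := fun _ => γ1 * (γ1⁻¹ - η)^2) (g := fun x => x) ?_
    rw [mfun_const, mfun_id]; exact hlow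
  have hμu : ∀ i, hSigh.eigenvalues i ≤ γ0 * (γ0⁻¹ - η)^2 := by
    refine le_of_loewner_mfun hSigh (f := fun x => x) (g := fun _ => γ0 * (γ0⁻¹ - η)^2) ?_
    rw [mfun_const, mfun_id]; exact hup
  have hμ0 : ∀ i, 0 ≤ hSigh.eigenvalues i := fun i =>
    le_trans (by positivity) (hμl i)
  -- identify the matrix square root
  have hPeq : Sig * (Sig + (4 * η) • (1 : Mat d)) = mfun hSigh (fun x => x * (x + 4 * η)) := by
    have h := mfun_add hSigh (fun x => x) (fun _ => 4 * η)
    rw [mfun_id, mfun_const] at h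
    have h' : Sig + (4 * η) • (1 : Mat d) = mfun hSigh (fun x => x + 4 * η) :=
      h.trans (mfun_congr hSigh fun i => rfl)
    have h2 := mfun_mul hSigh (fun x => x) (fun x => x + 4 * η)
    rw [mfun_id] at h2
    rw [h', h2]
    try exact mfun_congr hSigh fun i => rfl
  have hPpsd : (Sig * (Sig + (4 * η) • (1 : Mat d))).PosSemidef := by
    rw [hPeq]
    exact mfun_posSemidef hSigh fun i =>
      mul_nonneg (hμ0 i) (by linarith [hμ0 i, hη0])
  have hsqrt_eq : msqrt (Sig * (Sig + (4 * η) • (1 : Mat d))) =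
      mfun hSigh (fun x => Real.sqrt (x * (x + 4 * η))) := by
    unfold msqrt
    rw [dif_pos hPpsd]
    have key : ∀ {B : Mat d} (hB : B.IsHermitian) (f : ℝ → ℝ),
        (hB.eigenvectorUnitary : Mat d) * Matrix.diagonal (f ∘ hB.eigenvalues) *
          star (hB.eigenvectorUnitary : Mat d) = cfc f B := by
      intro B hB f
      rw [hB.cfc_eq]
      simp [IsHermitian.cfc, Unitary.conjStarAlgAut_apply, Function.comp_def]
    refine (key hPpsd.1 Real.sqrt).trans ?_
    have hm : ∀ f, mfun hSigh f = cfc f Sig := fun f => key hSigh f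
    rw [hPeq, hm, hm, ← cfc_comp Real.sqrt (fun x => x * (x + 4 * η)) Sig hSigh.isSelfAdjoint]
    rfl
  have hfin : (1 / 2 : ℝ) • (Sig + (2 * η) • (1 : Mat d) +
      msqrt (Sig * (Sig + (4 * η) • (1 : Mat d)))) =
      mfun hSigh (fun x => (1/2) * (x + 2*η + Real.sqrt (x * (x + 4*η)))) := by
    have e1 := mfun_add hSigh (fun x => x) (fun _ => 2 * η)
    rw [mfun_id, mfun_const] at e1
    have e1' : Sig + (2 * η) • (1 : Mat d) = mfun hSigh (fun x => x + 2 * η) :=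
      e1.trans (mfun_congr hSigh fun i => rfl)
    have e2 := mfun_add hSigh (fun x => x + 2 * η) (fun x => Real.sqrt (x * (x + 4 * η)))
    have e2' : mfun hSigh (fun x => x + 2 * η) + mfun hSigh (fun x => Real.sqrt (x * (x + 4 * η)))
        = mfun hSigh (fun x => x + 2 * η + Real.sqrt (x * (x + 4 * η))) :=
      e2.trans (mfun_congr hSigh fun i => rfl)
    have e3 := mfun_smul hSigh (1/2 : ℝ) (fun x => x + 2 * η + Real.sqrt (x * (x + 4 * η)))
    rw [hsqrt_eq, e1', e2', e3]
  constructor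
  · rw [hfin, show γ1⁻¹ • (1 : Mat d) = mfun hSigh (fun _ => γ1⁻¹) from
      (mfun_const hSigh _).symm]
    exact loewner_mfun hSigh fun i => psi_lower hγ1 hη0 (hμ0 i) (hμl i)
  · rw [hfin, show γ0⁻¹ • (1 : Mat d) = mfun hSigh (fun _ => γ0⁻¹) from
      (mfun_const hSigh _).symm]
    exact loewner_mfun hSigh fun i => psi_upper hγ0 hη0 hη1' (hμ0 i) (hμu i)

end
end
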